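/- Let A be an n×n irreducible matrix over a field F with n ≥ 4. Then every matrix B ∈ F^{n×n} with the same principal minors as A (A_S = B_S for all S ⊆ [n]) is irreducible. -/

import Mathlib

/-- The principal minor of `A` indexed by the set `S` (equal to `1` when `S = ∅`). -/
def principalMinor {F : Type*} [CommRing F] {n : ℕ}
    (A : Matrix (Fin n) (Fin n) F) (S : Finset (Fin n)) : F :=
  (A.submatrix (fun i : S => (i : Fin n)) (fun j : S => (j : Fin n))).det

/-- A square matrix is irreducible if it cannot be brought, by a simultaneous
permutation of rows and columns, to a block upper triangular form with at least two
diagonal blocks. -/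
def Matrix.IsIrreducibleBlock {α : Type*} [Fintype α] [DecidableEq α] {R : Type*} [Zero R]
    (A : Matrix α α R) : Prop :=
  ¬∃ X : Finset α, X.Nonempty ∧ X ≠ Finset.univ ∧ ∀ i ∉ X, ∀ j ∈ X, A i j = 0

namespace PMIrr

open Finset Equiv Equiv.Perm

variable {F : Type*} [Field F] {n : ℕ}

/-- cyclic monomial of a list -/
def cmon (A : Matrix (Fin n) (Fin n) F) (l : List (Fin n)) : F :=
  (l.map (fun w => A (l.formPerm w) w)).prod

lemma formPerm_map_apply {α β : Type*} [DecidableEq α] [DecidableEq β]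
    (f : α → β) (l : List α) (hl : l.Nodup) (hlf : (l.map f).Nodup)
    (x : α) (hx : x ∈ l) :
    (l.map f).formPerm (f x) = f (l.formPerm x) := by
  obtain ⟨i, hi, rfl⟩ := List.mem_iff_getElem.mp hx
  have h1 : f l[i] = (l.map f)[i]'(by simpa using hi) := by simp
  rw [h1, List.formPerm_apply_getElem _ hlf i (by simpa using hi),
    List.formPerm_apply_getElem _ hl i hi]
  simp

lemma det_block (C : Matrix (Fin n) (Fin n) F) (S T : Finset (Fin n))
    (q : {x // x ∈ S} → Prop) [DecidablePred q]
    (hq : ∀ v : Fin n, (∃ h : v ∈ S, q ⟨v, h⟩) ↔ v ∈ T) :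
    (Matrix.toSquareBlockProp
      (C.submatrix (fun i : S => (i : Fin n)) (fun j : S => (j : Fin n))) q).det
      = principalMinor C T := by
  let e : {a : {x // x ∈ S} // q a} ≃ {x // x ∈ T} :=
    { toFun := fun a => ⟨a.1.1, (hq _).1 ⟨a.1.2, a.2⟩⟩
      invFun := fun t => ⟨⟨t.1, ((hq t.1).2 t.2).choose⟩, ((hq t.1).2 t.2).choose_spec⟩
      left_inv := fun a => by ext; rfl
      right_inv := fun t => by ext; rfl }
  have h2 : Matrix.toSquareBlockProp
      (C.submatrix (fun i : S => (i : Fin n)) (fun j : S => (j : Fin n))) q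
      = (C.submatrix (fun i : T => (i : Fin n)) (fun j : T => (j : Fin n))).submatrix e e := by
    ext i j; rfl
  rw [h2, principalMinor, Matrix.det_submatrix_equiv_self]

lemma blockMul (C : Matrix (Fin n) (Fin n) F) (X : Finset (Fin n))
    (h : ∀ i ∉ X, ∀ j ∈ X, C i j = 0) (S : Finset (Fin n)) :
    principalMinor C S = principalMinor C (S ∩ X) * principalMinor C (S \ X) := by
  classical
  have h2 : ∀ i : {x // x ∈ S}, ¬((i : Fin n) ∈ X) → ∀ j : {x // x ∈ S},
      ((j : Fin n) ∈ X) →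
      (C.submatrix (fun i : S => (i : Fin n)) (fun j : S => (j : Fin n))) i j = 0 :=
    fun i hi j hj => h _ hi _ hj
  have := Matrix.twoBlockTriangular_det
    (C.submatrix (fun i : S => (i : Fin n)) (fun j : S => (j : Fin n)))
    (fun v => (v : Fin n) ∈ X) h2
  rw [principalMinor, this,
    det_block C S (S ∩ X) _ (fun v => by simp [and_comm]),
    det_block C S (S \ X) _ (fun v => by simp [and_comm])]

lemma pm_congr (A A' : Matrix (Fin n) (Fin n) F) (T : Finset (Fin n))
    (h : ∀ i ∈ T, ∀ j ∈ T, A i j = A' i j) : principalMinor A T = principalMinor A' T := by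
  unfold principalMinor
  congr 1
  ext i j
  exact h _ i.2 _ j.2





variable {α : Type*} [Fintype α] [DecidableEq α]

lemma cycle_moves (σ : Perm α) (h2 : σ.support = Finset.univ) (x : α) : σ x ≠ x := by
  have : x ∈ σ.support := h2 ▸ Finset.mem_univ x
  exact mem_support.mp this

lemma cycle_surj (σ : Perm α) (h1 : σ.IsCycle) (h2 : σ.support = Finset.univ) (x y : α) :
    ∃ i < orderOf σ, (σ ^ i) x = y := by
  have hsc : σ.SameCycle x y := h1.sameCycle (cycle_moves σ h2 x) (cycle_moves σ h2 y)
  exact hsc.exists_pow_eq'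

lemma cycle_pow_fix (σ : Perm α) (h1 : σ.IsCycle) (h2 : σ.support = Finset.univ)
    (x : α) (d : ℕ) (hd : (σ ^ d) x = x) : orderOf σ ∣ d := by
  have hone : σ ^ d = 1 := by
    ext y
    obtain ⟨i, _, rfl⟩ := cycle_surj σ h1 h2 x y
    calc (σ ^ d) ((σ ^ i) x) = (σ ^ i) ((σ ^ d) x) := by
          rw [← Equiv.Perm.mul_apply, ← Equiv.Perm.mul_apply, pow_mul_comm]
      _ = (σ ^ i) x := by rw [hd]
      _ = (1 : Perm α) ((σ ^ i) x) := rfl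
  exact orderOf_dvd_of_pow_eq_one hone

lemma cycle_pow_inj (σ : Perm α) (h1 : σ.IsCycle) (h2 : σ.support = Finset.univ)
    (x : α) {i j : ℕ} (hi : i < orderOf σ) (hj : j < orderOf σ)
    (h : (σ ^ i) x = (σ ^ j) x) : i = j := by
  rcases le_or_gt i j with hij | hij
  · have : (σ ^ (j - i)) ((σ ^ i) x) = (σ ^ i) x := by
      rw [← Equiv.Perm.mul_apply, ← pow_add, Nat.sub_add_cancel hij, h]
    have hdvd := cycle_pow_fix σ h1 h2 _ _ this
    have : j - i = 0 := Nat.eq_zero_of_dvd_of_lt hdvd (by omega)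
    omega
  · have : (σ ^ (i - j)) ((σ ^ j) x) = (σ ^ j) x := by
      rw [← Equiv.Perm.mul_apply, ← pow_add, Nat.sub_add_cancel hij.le, ← h]
    have hdvd := cycle_pow_fix σ h1 h2 _ _ this
    have : i - j = 0 := by
      rcases Nat.eq_zero_or_pos (i - j) with h0 | h0
      · exact h0
      · exact absurd (Nat.le_of_dvd h0 hdvd) (by omega)
    omega

lemma cycle_pow_mod (σ : Perm α) (h1 : σ.IsCycle) (h2 : σ.support = Finset.univ)
    (x : α) (c d : ℕ) (h : c ≤ d) (he : (σ ^ c) x = (σ ^ d) x) : orderOf σ ∣ d - c := by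
  apply cycle_pow_fix σ h1 h2 ((σ ^ c) x)
  rw [← Equiv.Perm.mul_apply, ← pow_add, Nat.sub_add_cancel h, ← he]

lemma sum_nonpreserving (A : Matrix (Fin n) (Fin n) F) (X : Finset (Fin n))
    (S : Finset (Fin n)) (P : Perm {x // x ∈ S} → Prop) [DecidablePred P]
    (hPdef : ∀ σ, P σ ↔ ∀ i : {x // x ∈ S}, ((σ i : Fin n) ∈ X ↔ (i : Fin n) ∈ X))
    (hMulS : principalMinor A S = principalMinor A (S ∩ X) * principalMinor A (S \ X)) :
    ∑ σ ∈ Finset.univ.filter (fun σ => ¬ P σ),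
      Equiv.Perm.sign σ • ∏ i, A ((σ i : Fin n)) ((i : Fin n)) = 0 := by
  classical
  set A' : Matrix (Fin n) (Fin n) F :=
    fun i j => if (i ∈ X ↔ j ∈ X) then A i j else 0 with hA'
  have hA'X : ∀ i ∉ X, ∀ j ∈ X, A' i j = 0 := by
    intro i hi j hj
    simp only [hA']
    rw [if_neg]
    tauto
  have hpmA' : principalMinor A' S = principalMinor A (S ∩ X) * principalMinor A (S \ X) := by
    rw [blockMul A' X hA'X S]
    congr 1
    · refine (pm_congr A A' (S ∩ X) fun i hi j hj => ?_).symm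
      simp only [hA']
      rw [if_pos]
      simp only [Finset.mem_inter] at hi hj
      exact ⟨fun _ => hj.2, fun _ => hi.2⟩
    · refine (pm_congr A A' (S \ X) fun i hi j hj => ?_).symm
      simp only [hA']
      rw [if_pos]
      simp only [Finset.mem_sdiff] at hi hj
      exact ⟨fun h => absurd h hi.2, fun h => absurd h hj.2⟩
  have hdet : principalMinor A S =
      ∑ σ : Perm {x // x ∈ S},
        Equiv.Perm.sign σ • ∏ i, A ((σ i : Fin n)) ((i : Fin n)) := by
    rw [principalMinor, Matrix.det_apply]
    rfl
  have hdet' : principalMinor A' S =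
      ∑ σ : Perm {x // x ∈ S},
        Equiv.Perm.sign σ • ∏ i, A' ((σ i : Fin n)) ((i : Fin n)) := by
    rw [principalMinor, Matrix.det_apply]
    rfl
  have hsum' : ∑ σ : Perm {x // x ∈ S},
        Equiv.Perm.sign σ • ∏ i, A' ((σ i : Fin n)) ((i : Fin n))
      = ∑ σ ∈ Finset.univ.filter P,
        Equiv.Perm.sign σ • ∏ i, A ((σ i : Fin n)) ((i : Fin n)) := by
    rw [← Finset.sum_filter_add_sum_filter_not Finset.univ P]
    have hz : ∑ σ ∈ Finset.univ.filter (fun σ => ¬ P σ),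
        Equiv.Perm.sign σ • ∏ i, A' ((σ i : Fin n)) ((i : Fin n)) = 0 := by
      apply Finset.sum_eq_zero
      intro σ hσ
      have hσ' : ¬ P σ := (Finset.mem_filter.mp hσ).2
      obtain ⟨i0, hi0⟩ := not_forall.mp (fun h => hσ' ((hPdef σ).mpr h))
      have h0 : A' ((σ i0 : Fin n)) ((i0 : Fin n)) = 0 := by
        simp only [hA']
        rw [if_neg hi0]
      rw [Finset.prod_eq_zero (Finset.mem_univ i0) h0, smul_zero]
    rw [hz, add_zero]
    apply Finset.sum_congr rfl
    intro σ hσ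
    have hσ' : P σ := (Finset.mem_filter.mp hσ).2
    congr 1
    apply Finset.prod_congr rfl
    intro i _
    simp only [hA']
    rw [if_pos ((hPdef σ).mp hσ' i)]
  have hfull : ∑ σ : Perm {x // x ∈ S},
      Equiv.Perm.sign σ • ∏ i, A ((σ i : Fin n)) ((i : Fin n))
      = (∑ σ ∈ Finset.univ.filter P,
          Equiv.Perm.sign σ • ∏ i, A ((σ i : Fin n)) ((i : Fin n)))
        + ∑ σ ∈ Finset.univ.filter (fun σ => ¬ P σ),
          Equiv.Perm.sign σ • ∏ i, A ((σ i : Fin n)) ((i : Fin n)) :=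
    (Finset.sum_filter_add_sum_filter_not Finset.univ P _).symm
  have := hdet.symm.trans (hMulS.trans (hpmA'.symm.trans (hdet'.trans hsum')))
  -- this : ∑ full = ∑ filter P
  rw [hfull] at this
  -- conclude
  exact left_eq_add.mp this.symm

lemma nonham_zero (A : Matrix (Fin n) (Fin n) F) (X S : Finset (Fin n)) (m : ℕ)
    (hcard : S.card ≤ m + 1)
    (hIH : ∀ l' : List (Fin n), l'.length ≤ m → l'.Nodup →
      (∃ v ∈ l', v ∈ X) → (∃ v ∈ l', v ∉ X) → cmon A l' = 0)
    (σ : Perm {x // x ∈ S})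
    (hnP : ¬ ∀ i : {x // x ∈ S}, ((σ i : Fin n) ∈ X ↔ (i : Fin n) ∈ X))
    (hnQ : ¬ (σ.IsCycle ∧ σ.support = Finset.univ)) :
    ∏ i, A ((σ i : Fin n)) ((i : Fin n)) = 0 := by
  classical
  obtain ⟨i0, hi0⟩ := not_forall.mp hnP
  have hmove : σ i0 ≠ i0 := by
    intro h
    rw [h] at hi0
    exact hi0 Iff.rfl
  have hi0s : i0 ∈ σ.support := mem_support.mpr hmove
  have hcyc : (σ.cycleOf i0).IsCycle := isCycle_cycleOf σ hmove
  have hne : (σ.cycleOf i0).support ≠ Finset.univ := by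
    intro hU
    apply hnQ
    have hall : ∀ y, σ.SameCycle i0 y := by
      intro y
      have : y ∈ (σ.cycleOf i0).support := hU ▸ Finset.mem_univ y
      exact (mem_support_cycleOf_iff.mp this).1
    have hσc : σ = σ.cycleOf i0 := by
      ext y
      rw [cycleOf_apply, if_pos (hall y)]
    exact ⟨hσc ▸ hcyc, hσc ▸ hU⟩
  have hlt : (σ.cycleOf i0).support.card < S.card := by
    have h1 : (σ.cycleOf i0).support ⊂ Finset.univ :=
      Finset.ssubset_iff_subset_ne.mpr ⟨Finset.subset_univ _, hne⟩
    have h2 := Finset.card_lt_card h1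
    simpa [Fintype.card_coe] using h2
  have hndlc : (σ.toList i0).Nodup := Equiv.Perm.nodup_toList σ i0
  have hndlf : ((σ.toList i0).map Subtype.val).Nodup := hndlc.map Subtype.val_injective
  have hlenlc : (σ.toList i0).length = (σ.cycleOf i0).support.card := Equiv.Perm.length_toList σ i0
  have hmemlc : ∀ y, y ∈ σ.toList i0 ↔ σ.SameCycle i0 y := by
    intro y
    rw [Equiv.Perm.mem_toList_iff]
    exact and_iff_left hi0s
  have hi0m : i0 ∈ σ.toList i0 := (hmemlc i0).mpr (Equiv.Perm.SameCycle.refl _ _)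
  have hσi0m : σ i0 ∈ σ.toList i0 := (hmemlc _).mpr ⟨1, by simp⟩
  have hcross1 : ∃ v ∈ (σ.toList i0).map Subtype.val, v ∈ X := by
    by_cases h1 : (i0 : Fin n) ∈ X
    · exact ⟨(i0 : Fin n), List.mem_map_of_mem hi0m, h1⟩
    · refine ⟨((σ i0 : Fin n)), List.mem_map_of_mem hσi0m, ?_⟩
      by_contra h2
      exact hi0 ⟨fun h => absurd h h2, fun h => absurd h h1⟩
  have hcross2 : ∃ v ∈ (σ.toList i0).map Subtype.val, v ∉ X := by
    by_cases h1 : (i0 : Fin n) ∈ X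
    · refine ⟨((σ i0 : Fin n)), List.mem_map_of_mem hσi0m, ?_⟩
      by_contra h2
      exact hi0 ⟨fun _ => h1, fun _ => h2⟩
    · exact ⟨(i0 : Fin n), List.mem_map_of_mem hi0m, h1⟩
  have h0 : cmon A ((σ.toList i0).map Subtype.val) = 0 := by
    apply hIH _ _ hndlf hcross1 hcross2
    rw [List.length_map, hlenlc]
    omega
  rw [cmon] at h0
  have h0' : (0 : F) ∈ ((σ.toList i0).map Subtype.val).map
      (fun w => A (((σ.toList i0).map Subtype.val).formPerm w) w) := by
    exact List.prod_eq_zero_iff.mp h0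
  obtain ⟨w, hw, hgw⟩ := List.mem_map.mp h0'
  obtain ⟨wc, hwc, rfl⟩ := List.mem_map.mp hw
  have hform : ((σ.toList i0).map Subtype.val).formPerm (wc : Fin n)
      = ((σ.toList i0).formPerm wc : Fin n) :=
    formPerm_map_apply Subtype.val (σ.toList i0) hndlc hndlf wc hwc
  have hcyc_apply : (σ.toList i0).formPerm wc = σ wc := by
    rw [Equiv.Perm.formPerm_toList, cycleOf_apply, if_pos ((hmemlc wc).mp hwc)]
  have hfac : A ((σ wc : Fin n)) ((wc : Fin n)) = 0 := by
    rw [← hcyc_apply, ← hform]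
    exact hgw.symm ▸ rfl
  exact Finset.prod_eq_zero (Finset.mem_univ wc) hfac

lemma shortcut (A : Matrix (Fin n) (Fin n) F) (X S : Finset (Fin n)) (m : ℕ)
    (hcard : S.card ≤ m + 1)
    (hIH : ∀ l' : List (Fin n), l'.length ≤ m → l'.Nodup →
      (∃ v ∈ l', v ∈ X) → (∃ v ∈ l', v ∉ X) → cmon A l' = 0)
    (τ ρ : Perm {x // x ∈ S})
    (hτc : τ.IsCycle) (hτs : τ.support = Finset.univ)
    (hρs : ρ.support = Finset.univ)
    (hτnz : ∀ i, A ((τ i : Fin n)) ((i : Fin n)) ≠ 0)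
    (hρnz : ∀ i, A ((ρ i : Fin n)) ((i : Fin n)) ≠ 0)
    (v : {x // x ∈ S}) (hv : ρ v ≠ τ v) :
    ∃ k, 1 ≤ k ∧ k + 1 < orderOf τ ∧ (τ ^ k) (ρ v) = v ∧
      ∀ i ≤ k, (((τ ^ i) (ρ v) : Fin n) ∈ X ↔ (v : Fin n) ∈ X) := by
  classical
  have horder : orderOf τ = S.card := by
    rw [hτc.orderOf, hτs]
    simp [Fintype.card_coe]
  obtain ⟨k, hklt, hkeq⟩ := cycle_surj τ hτc hτs (ρ v) v
  have hk0 : k ≠ 0 := by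
    intro h
    rw [h, pow_zero] at hkeq
    exact cycle_moves ρ hρs v (by simpa using hkeq)
  have hkne : k ≠ orderOf τ - 1 := by
    intro h
    apply hv
    have h1 : (τ ^ (k + 1)) (ρ v) = τ v := by
      rw [pow_succ', Equiv.Perm.mul_apply]
      exact congrArg τ hkeq
    have h2 : k + 1 = orderOf τ := by omega
    rw [h2, pow_orderOf_eq_one] at h1
    simpa using h1
  have hk1 : k + 1 < orderOf τ := by omega
  -- the shortcut cycle as a list
  set D : List (Fin n) := (List.range (k + 1)).map (fun i => (((τ ^ i) (ρ v) : Fin n))) with hD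
  have hlenD : D.length = k + 1 := by simp [hD]
  have hgetD : ∀ (i : ℕ) (h : i < k + 1), D[i]'(by omega) = (((τ ^ i) (ρ v) : Fin n)) := by
    intro i h
    simp [hD]
  have hndD : D.Nodup := by
    apply List.Nodup.map_on _ List.nodup_range
    intro x hx y hy hxy
    rw [List.mem_range] at hx hy
    exact cycle_pow_inj τ hτc hτs (ρ v) (by omega) (by omega) (Subtype.val_injective hxy)
  have hmemD : ∀ i ≤ k, (((τ ^ i) (ρ v) : Fin n)) ∈ D := by
    intro i hi
    rw [hD]
    exact List.mem_map_of_mem (List.mem_range.mpr (by omega))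
  have hvD : ((v : Fin n)) ∈ D := by
    have := hmemD k le_rfl
    rwa [hkeq] at this
  have hcm : cmon A D ≠ 0 := by
    intro h0
    rw [cmon] at h0
    obtain ⟨u, hu, hgu⟩ := List.mem_map.mp (List.prod_eq_zero_iff.mp h0)
    obtain ⟨i, hi, rfl⟩ := List.mem_iff_getElem.mp hu
    rw [hlenD] at hi
    rw [List.formPerm_apply_getElem _ hndD i (by omega)] at hgu
    simp only [hD, List.getElem_map, List.getElem_range, List.length_map,
      List.length_range] at hgu
    rcases Nat.lt_or_ge i k with hik | hik
    · rw [Nat.mod_eq_of_lt (show i + 1 < k + 1 by omega)] at hgu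
      rw [pow_succ'] at hgu
      simp only [Equiv.Perm.mul_apply] at hgu
      exact hτnz _ hgu
    · have hik' : i = k := by omega
      subst hik'
      rw [Nat.mod_self, pow_zero] at hgu
      simp only [Equiv.Perm.coe_one, id_eq] at hgu
      rw [hkeq] at hgu
      exact hρnz v hgu
  have hnotcross : ¬ ((∃ u ∈ D, u ∈ X) ∧ (∃ u ∈ D, u ∉ X)) := by
    rintro ⟨h1, h2⟩
    exact hcm (hIH D (by omega) hndD h1 h2)
  refine ⟨k, by omega, hk1, hkeq, ?_⟩
  intro i hi
  by_cases hvX : (v : Fin n) ∈ X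
  · simp only [hvX, iff_true]
    by_contra hnot
    exact hnotcross ⟨⟨_, hvD, hvX⟩, ⟨_, hmemD i hi, hnot⟩⟩
  · simp only [hvX, iff_false]
    intro hmem
    exact hnotcross ⟨⟨_, hmemD i hi, hmem⟩, ⟨_, hvD, hvX⟩⟩

lemma cmon_attach {γ : Type*} [DecidableEq γ] (A : Matrix (Fin n) (Fin n) F)
    (l : List (Fin n)) (hnd : l.Nodup) (lS : List γ) (f : γ → Fin n)
    (hf : lS.map f = l) (hndS : lS.Nodup) :
    cmon A l = (lS.map (fun w => A (f (lS.formPerm w)) (f w))).prod := by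
  subst hf
  rw [cmon, List.map_map]
  congr 1
  apply List.map_congr_left
  intro w hw
  simp only [Function.comp_apply]
  rw [formPerm_map_apply f lS hndS hnd w hw]


lemma key (A : Matrix (Fin n) (Fin n) F) (X : Finset (Fin n))
    (hMul : ∀ S, principalMinor A S = principalMinor A (S ∩ X) * principalMinor A (S \ X)) :
    ∀ (m : ℕ) (l : List (Fin n)), l.length ≤ m → l.Nodup →
      (∃ v ∈ l, v ∈ X) → (∃ v ∈ l, v ∉ X) → cmon A l = 0 := by
  classical
  intro m
  induction m with
  | zero =>
    intro l hlen _ hin _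
    obtain ⟨v, hv, _⟩ := hin
    rw [Nat.le_zero, List.length_eq_zero_iff] at hlen
    subst hlen
    simp at hv
  | succ m IH =>
    intro l hlen hnd hin hout
    by_contra hne
    obtain ⟨v0, hv0l, hv0X⟩ := hin
    obtain ⟨w0, hw0l, hw0X⟩ := hout
    have hv0w0 : v0 ≠ w0 := fun h => hw0X (h ▸ hv0X)
    have h2len : 2 ≤ l.length := by
      rcases l with _ | ⟨a, _ | ⟨b, t⟩⟩
      · simp at hv0l
      · simp only [List.mem_singleton] at hv0l hw0l
        exact absurd (hv0l.trans hw0l.symm) hv0w0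
      · simp
    set S := l.toFinset with hSdef
    have hcard : S.card = l.length := List.toFinset_card_of_nodup hnd
    have hcard2 : 2 ≤ S.card := hcard ▸ h2len
    have hcardle : S.card ≤ m + 1 := by omega
    -- the Hamiltonian cycle σ1 given by l
    set lS : List {x // x ∈ S} :=
      l.attach.map (fun x => (⟨x.1, List.mem_toFinset.mpr x.2⟩ : {x // x ∈ S})) with hlS
    have hmap : lS.map Subtype.val = l := by
      rw [hlS, List.map_map]
      exact List.attach_map_subtype_val l
    have hndlS : lS.Nodup := by
      apply List.Nodup.map_on _ (List.nodup_attach.mpr hnd)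
      intro x _ y _ hxy
      have hval := congrArg Subtype.val hxy
      simp only [] at hval
      exact Subtype.ext hval
    have hlenlS : lS.length = l.length := by rw [hlS]; simp
    have htofin : ∀ v : {x // x ∈ S}, v ∈ lS := by
      intro v
      have h1 : (v : Fin n) ∈ lS.map Subtype.val := hmap ▸ List.mem_toFinset.mp v.2
      obtain ⟨w, hw, hwv⟩ := List.mem_map.mp h1
      exact (Subtype.ext hwv : w = v) ▸ hw
    have hlSuniv : lS.toFinset = Finset.univ :=
      Finset.eq_univ_iff_forall.mpr (fun v => List.mem_toFinset.mpr (htofin v))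
    set σ1 : Perm {x // x ∈ S} := lS.formPerm with hσ1
    have hQ1c : σ1.IsCycle := List.isCycle_formPerm hndlS (by omega)
    have hQ1s : σ1.support = Finset.univ := by
      rw [hσ1, List.support_formPerm_of_nodup lS hndlS, hlSuniv]
      intro x hx
      have := congrArg List.length hx
      simp at this
      omega
    have horder1 : orderOf σ1 = S.card := by
      rw [hQ1c.orderOf, hQ1s]
      simp [Fintype.card_coe]
    have hμ1 : ∏ i, A ((σ1 i : Fin n)) ((i : Fin n)) = cmon A l := by
      have h1 : ∏ i, A ((σ1 i : Fin n)) ((i : Fin n))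
          = ∏ i ∈ lS.toFinset, A ((σ1 i : Fin n)) ((i : Fin n)) := by
        rw [hlSuniv]
      rw [h1, List.prod_toFinset _ hndlS,
        cmon_attach A l hnd lS Subtype.val hmap hndlS]
    -- the permutation-sum identities
    have E1 := sum_nonpreserving A X S
      (fun σ : Perm {x // x ∈ S} =>
        ∀ i : {x // x ∈ S}, ((σ i : Fin n) ∈ X ↔ (i : Fin n) ∈ X))
      (fun σ => Iff.rfl) (hMul S)
    have hQP : ∀ σ : Perm {x // x ∈ S}, (σ.IsCycle ∧ σ.support = Finset.univ) →
        ¬ (∀ i : {x // x ∈ S}, ((σ i : Fin n) ∈ X ↔ (i : Fin n) ∈ X)) := by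
      rintro σ ⟨hc, hs⟩ hP
      have hconst : ∀ (i : ℕ) (x : {x // x ∈ S}),
          (((σ ^ i) x : Fin n) ∈ X ↔ (x : Fin n) ∈ X) := by
        intro i
        induction i with
        | zero => intro x; rw [pow_zero]; rfl
        | succ i ih =>
          intro x
          rw [pow_succ', Equiv.Perm.mul_apply]
          exact (hP ((σ ^ i) x)).trans (ih x)
      obtain ⟨e, _, hev⟩ := cycle_surj σ hc hs ⟨v0, List.mem_toFinset.mpr hv0l⟩
        ⟨w0, List.mem_toFinset.mpr hw0l⟩
      have hcv := hconst e ⟨v0, List.mem_toFinset.mpr hv0l⟩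
      rw [hev] at hcv
      exact hw0X (hcv.mpr hv0X)
    have hfilt : (Finset.univ.filter (fun σ : Perm {x // x ∈ S} =>
          ¬ ∀ i : {x // x ∈ S}, ((σ i : Fin n) ∈ X ↔ (i : Fin n) ∈ X))).filter
            (fun σ => σ.IsCycle ∧ σ.support = Finset.univ)
        = Finset.univ.filter (fun σ => σ.IsCycle ∧ σ.support = Finset.univ) := by
      ext σ
      simp only [Finset.mem_filter, Finset.mem_univ, true_and]
      exact ⟨fun h => h.2, fun h => ⟨hQP σ h, h⟩⟩
    have E2 : ∑ σ ∈ Finset.univ.filter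
        (fun σ : Perm {x // x ∈ S} => σ.IsCycle ∧ σ.support = Finset.univ),
        Equiv.Perm.sign σ • ∏ i, A ((σ i : Fin n)) ((i : Fin n)) = 0 := by
      have hsplit := Finset.sum_filter_add_sum_filter_not
        (Finset.univ.filter (fun σ : Perm {x // x ∈ S} =>
          ¬ ∀ i : {x // x ∈ S}, ((σ i : Fin n) ∈ X ↔ (i : Fin n) ∈ X)))
        (fun σ => σ.IsCycle ∧ σ.support = Finset.univ)
        (fun σ => Equiv.Perm.sign σ • ∏ i, A ((σ i : Fin n)) ((i : Fin n)))
      have hz2 : ∑ σ ∈ (Finset.univ.filter (fun σ : Perm {x // x ∈ S} =>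
          ¬ ∀ i : {x // x ∈ S}, ((σ i : Fin n) ∈ X ↔ (i : Fin n) ∈ X))).filter
            (fun σ => ¬ (σ.IsCycle ∧ σ.support = Finset.univ)),
          Equiv.Perm.sign σ • ∏ i, A ((σ i : Fin n)) ((i : Fin n)) = 0 := by
        apply Finset.sum_eq_zero
        intro σ hσ
        rw [Finset.mem_filter] at hσ
        obtain ⟨hσ1', hσ2'⟩ := hσ
        rw [Finset.mem_filter] at hσ1'
        rw [nonham_zero A X S m hcardle IH σ hσ1'.2 hσ2', smul_zero]
      rw [hz2, add_zero, hfilt, E1] at hsplit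
      exact hsplit
    have E3 : ∑ σ ∈ Finset.univ.filter
        (fun σ : Perm {x // x ∈ S} => σ.IsCycle ∧ σ.support = Finset.univ),
        ∏ i, A ((σ i : Fin n)) ((i : Fin n)) = 0 := by
      have hsgn : ∀ σ ∈ Finset.univ.filter
          (fun σ : Perm {x // x ∈ S} => σ.IsCycle ∧ σ.support = Finset.univ),
          Equiv.Perm.sign σ • ∏ i, A ((σ i : Fin n)) ((i : Fin n))
            = (-(-1) ^ S.card : ℤˣ) • ∏ i, A ((σ i : Fin n)) ((i : Fin n)) := by
        intro σ hσ
        obtain ⟨hc, hs⟩ := (Finset.mem_filter.mp hσ).2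
        rw [hc.sign, hs]
        congr 2
        simp [Finset.card_univ, Fintype.card_coe]
      rw [Finset.sum_congr rfl hsgn, ← Finset.smul_sum] at E2
      rcases Int.units_eq_one_or (-(-1) ^ S.card : ℤˣ) with hu | hu
      · rw [hu, one_smul] at E2
        exact E2
      · rw [hu, Units.smul_def] at E2
        have h9 : ((-1 : ℤˣ) : ℤ) = -1 := rfl
        rw [h9, neg_one_zsmul, neg_eq_zero] at E2
        exact E2
    -- σ1 is a nonzero hamiltonian term, get another one
    have hσ1Q : σ1 ∈ Finset.univ.filter
        (fun σ : Perm {x // x ∈ S} => σ.IsCycle ∧ σ.support = Finset.univ) :=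
      Finset.mem_filter.mpr ⟨Finset.mem_univ _, ⟨hQ1c, hQ1s⟩⟩
    have hμ1ne : ∏ i, A ((σ1 i : Fin n)) ((i : Fin n)) ≠ 0 := by
      rw [hμ1]; exact hne
    obtain ⟨σ2, hσ2Q, hσ21, hμ2ne⟩ : ∃ σ2 ∈ Finset.univ.filter
        (fun σ : Perm {x // x ∈ S} => σ.IsCycle ∧ σ.support = Finset.univ),
        σ2 ≠ σ1 ∧ ∏ i, A ((σ2 i : Fin n)) ((i : Fin n)) ≠ 0 := by
      by_contra hno
      push_neg at hno
      have hsingle := Finset.sum_eq_single_of_mem σ1 hσ1Q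
        (fun b hb hbne => hno b hb hbne)
      rw [E3] at hsingle
      exact hμ1ne hsingle.symm
    obtain ⟨hQ2c, hQ2s⟩ := (Finset.mem_filter.mp hσ2Q).2
    have hnz1 : ∀ i, A ((σ1 i : Fin n)) ((i : Fin n)) ≠ 0 :=
      fun i hz => hμ1ne (Finset.prod_eq_zero (Finset.mem_univ i) hz)
    have hnz2 : ∀ i, A ((σ2 i : Fin n)) ((i : Fin n)) ≠ 0 :=
      fun i hz => hμ2ne (Finset.prod_eq_zero (Finset.mem_univ i) hz)
    -- the crossing edge of σ1
    obtain ⟨a, ha⟩ := not_forall.mp (hQP σ1 ⟨hQ1c, hQ1s⟩)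
    have hba : σ2 a = σ1 a := by
      by_contra hne2
      obtain ⟨k, _, _, _, hside⟩ :=
        shortcut A X S m hcardle IH σ2 σ1 hQ2c hQ2s hQ1s hnz2 hnz1 a (Ne.symm hne2)
      have h0 := hside 0 (Nat.zero_le _)
      rw [pow_zero] at h0
      exact ha (by simpa using h0)
    -- the first disagreement after the crossing edge
    have hexj : ∃ j : ℕ, σ2 ((σ1 ^ j) (σ1 a)) ≠ σ1 ((σ1 ^ j) (σ1 a)) := by
      by_contra hallj
      push_neg at hallj
      apply hσ21
      apply Equiv.ext
      intro x
      obtain ⟨e, _, rfl⟩ := cycle_surj σ1 hQ1c hQ1s (σ1 a) x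
      exact hallj e
    have hjspec := Nat.find_spec hexj
    have hjmin : ∀ i < Nat.find hexj, σ2 ((σ1 ^ i) (σ1 a)) = σ1 ((σ1 ^ i) (σ1 a)) :=
      fun i hi => not_ne_iff.mp (Nat.find_min hexj hi)
    have hab2 : (σ1 ^ (S.card - 1)) (σ1 a) = a := by
      apply σ1.injective
      rw [← Equiv.Perm.mul_apply, ← pow_succ']
      have hstep : S.card - 1 + 1 = S.card := by omega
      rw [hstep, ← horder1, pow_orderOf_eq_one]
      rfl
    have hjlt : Nat.find hexj < S.card - 1 := by
      by_contra hge
      push_neg at hge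
      apply hσ21
      apply Equiv.ext
      intro x
      obtain ⟨e, he, rfl⟩ := cycle_surj σ1 hQ1c hQ1s (σ1 a) x
      rw [horder1] at he
      rcases Nat.lt_or_ge e (S.card - 1) with h1 | h1
      · exact hjmin e (by omega)
      · have he' : e = S.card - 1 := by omega
        subst he'
        rw [hab2, hba]
    obtain ⟨k, hk1, hk2, hkv, hside⟩ :=
      shortcut A X S m hcardle IH σ1 σ2 hQ1c hQ1s hQ2s hnz1 hnz2
        ((σ1 ^ Nat.find hexj) (σ1 a)) hjspec
    rw [horder1] at hk2
    obtain ⟨t, htlt, hteq⟩ :=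
      cycle_surj σ1 hQ1c hQ1s (σ1 a) (σ2 ((σ1 ^ Nat.find hexj) (σ1 a)))
    rw [horder1] at htlt
    have ht0 : t ≠ 0 := by
      intro h
      rw [h, pow_zero] at hteq
      simp only [Equiv.Perm.coe_one, id_eq] at hteq
      have h2 : σ2 ((σ1 ^ Nat.find hexj) (σ1 a)) = σ2 a := by
        rw [← hteq, hba]
      have h3 := σ2.injective h2
      have h4 : Nat.find hexj = S.card - 1 := by
        apply cycle_pow_inj σ1 hQ1c hQ1s (σ1 a) (by rw [horder1]; omega)
          (by rw [horder1]; omega)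
        exact h3.trans hab2.symm
      omega
    have htge : Nat.find hexj + 1 ≤ t := by
      by_contra hlt'
      push_neg at hlt'
      have h1 : σ2 ((σ1 ^ (t - 1)) (σ1 a)) = (σ1 ^ t) (σ1 a) := by
        rw [hjmin (t - 1) (by omega), ← Equiv.Perm.mul_apply, ← pow_succ']
        have hstep : t - 1 + 1 = t := by omega
        rw [hstep]
      have h2 : σ2 ((σ1 ^ Nat.find hexj) (σ1 a)) = σ2 ((σ1 ^ (t - 1)) (σ1 a)) := by
        rw [h1, hteq]
      have h3 := σ2.injective h2
      have h4 : Nat.find hexj = t - 1 := by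
        apply cycle_pow_inj σ1 hQ1c hQ1s (σ1 a) (by rw [horder1]; omega)
          (by rw [horder1]; omega)
        exact h3
      omega
    have hkval : k = Nat.find hexj + S.card - t := by
      apply cycle_pow_inj σ1 hQ1c hQ1s (σ2 ((σ1 ^ Nat.find hexj) (σ1 a)))
        (by rw [horder1]; omega) (by rw [horder1]; omega)
      have hgoal : (σ1 ^ (Nat.find hexj + S.card - t)) ((σ1 ^ t) (σ1 a))
          = (σ1 ^ Nat.find hexj) (σ1 a) := by
        rw [← Equiv.Perm.mul_apply, ← pow_add]
        have hexp : Nat.find hexj + S.card - t + t = Nat.find hexj + S.card := by omega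
        rw [hexp, pow_add, Equiv.Perm.mul_apply, ← horder1, pow_orderOf_eq_one]
        rfl
      rw [hkv, ← hteq, hgoal]
    have hb_eq : (σ1 ^ (S.card - t)) (σ2 ((σ1 ^ Nat.find hexj) (σ1 a))) = σ1 a := by
      rw [← hteq, ← Equiv.Perm.mul_apply, ← pow_add]
      have hexp : S.card - t + t = S.card := by omega
      rw [hexp, ← horder1, pow_orderOf_eq_one]
      rfl
    have ha_eq : (σ1 ^ (S.card - 1 - t)) (σ2 ((σ1 ^ Nat.find hexj) (σ1 a))) = a := by
      rw [← hteq, ← Equiv.Perm.mul_apply, ← pow_add]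
      have hexp : S.card - 1 - t + t = S.card - 1 := by omega
      rw [hexp]
      exact hab2
    have harc_b := hside (S.card - t) (by omega)
    have harc_a := hside (S.card - 1 - t) (by omega)
    rw [hb_eq] at harc_b
    rw [ha_eq] at harc_a
    exact ha (harc_b.trans harc_a.symm)

section Walks

variable {α : Type*}

lemma sublist_split {a : α} {t l : List α} (h : (a :: t).Sublist l) :
    ∃ u v, l = u ++ a :: v ∧ t.Sublist v := by
  induction l with
  | nil => simp at h
  | cons b l ih =>
    rcases h with h' | h'
    case cons h' =>
      obtain ⟨u, v, heq, hs⟩ := ih h'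
      exact ⟨b :: u, v, by rw [heq]; rfl, hs⟩
    case cons_cons h' =>
      exact ⟨[], l, rfl, h'⟩

lemma not_nodup_decomp (l : List α) (h : ¬ l.Nodup) :
    ∃ (a : α) (u v w : List α), l = u ++ a :: (v ++ a :: w) := by
  obtain ⟨a, hdup⟩ := List.exists_duplicate_iff_not_nodup.mpr h
  have hsub : [a, a].Sublist l := List.duplicate_iff_sublist.mp hdup
  obtain ⟨u, v₁, rfl, hsub1⟩ := sublist_split hsub
  obtain ⟨v, w, rfl, -⟩ := sublist_split hsub1
  exact ⟨a, u, v, w, rfl⟩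

lemma cw_rotate_one (r : α → α → Prop) (l : List α)
    (h : l.Chain' r ∧ ∀ (hne : l ≠ []), r (l.getLast hne) (l.head hne)) :
    (l.rotate 1).Chain' r ∧
      ∀ (hne : (l.rotate 1) ≠ []), r ((l.rotate 1).getLast hne) ((l.rotate 1).head hne) := by
  obtain ⟨hch, hwr⟩ := h
  rcases l with _ | ⟨b, t⟩
  · simpa using hch
  have hrot : (b :: t).rotate 1 = t ++ [b] := by
    rw [List.rotate_cons_succ, List.rotate_zero]
  rw [hrot]
  constructor
  · refine List.isChain_append.mpr ⟨List.IsChain.tail hch, List.isChain_singleton b, ?_⟩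
    intro x hx y hy
    simp only [List.head?_cons, Option.mem_def, Option.some.injEq] at hy
    subst hy
    rcases t with _ | ⟨c, t'⟩
    · simp at hx
    · rw [List.getLast?_eq_getLast (List.cons_ne_nil c t')] at hx
      simp only [Option.mem_def, Option.some.injEq] at hx
      subst hx
      have hw := hwr (List.cons_ne_nil _ _)
      rwa [List.getLast_cons (List.cons_ne_nil c t')] at hw
  · intro hne'
    have hgl : (t ++ [b]).getLast hne' = b := by
      rw [List.getLast_append_of_ne_nil _ (List.cons_ne_nil b [])]
      rfl
    rw [hgl]
    rcases t with _ | ⟨c, t'⟩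
    · simpa using hwr (List.cons_ne_nil _ _)
    · have hhd : ((c :: t') ++ [b]).head (by simp) = c := rfl
      rw [hhd]
      exact (List.isChain_cons_cons.mp hch).1

lemma cw_rotate (r : α → α → Prop) (l : List α)
    (h : l.Chain' r ∧ ∀ (hne : l ≠ []), r (l.getLast hne) (l.head hne)) (k : ℕ) :
    (l.rotate k).Chain' r ∧
      ∀ (hne : (l.rotate k) ≠ []), r ((l.rotate k).getLast hne) ((l.rotate k).head hne) := by
  induction k with
  | zero => simpa using h
  | succ k ih =>
    have hr : l.rotate (k + 1) = (l.rotate k).rotate 1 := by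
      rw [List.rotate_rotate]
    rw [hr]
    exact cw_rotate_one r _ ih

lemma dedup_cycle (r : α → α → Prop) (q : α → Prop) :
    ∀ (N : ℕ) (l : List α) (hne : l ≠ []), l.length ≤ N → l.Chain' r →
      r (l.getLast hne) (l.head hne) → (∃ v ∈ l, q v) → (∃ v ∈ l, ¬ q v) →
      ∃ (l' : List α) (hne' : l' ≠ []), l'.Nodup ∧ l'.Chain' r ∧
        r (l'.getLast hne') (l'.head hne') ∧ (∃ v ∈ l', q v) ∧ (∃ v ∈ l', ¬ q v) := by
  intro N
  induction N with
  | zero =>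
    intro l hne hlen
    rw [Nat.le_zero, List.length_eq_zero_iff] at hlen
    exact absurd hlen hne
  | succ N IH =>
    intro l hne hlen hch hwr hq hnq
    by_cases hnd : l.Nodup
    · exact ⟨l, hne, hnd, hch, hwr, hq, hnq⟩
    obtain ⟨a, u, v, w, rfl⟩ := not_nodup_decomp l hnd
    have hrot : (u ++ a :: (v ++ a :: w)).rotate u.length = (a :: (v ++ a :: w)) ++ u :=
      List.rotate_append_length_eq u _
    have hP := cw_rotate r (u ++ a :: (v ++ a :: w)) ⟨hch, fun _ => hwr⟩ u.length
    rw [hrot] at hP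
    obtain ⟨hch₀, hwr₀⟩ := hP
    have hsplit : (a :: (v ++ a :: w)) ++ u = (a :: v) ++ (a :: (w ++ u)) := by
      simp
    rw [hsplit] at hch₀ hwr₀
    replace hch₀ := List.isChain_append.mp hch₀
    obtain ⟨hch1, hch2, hjun⟩ := hch₀
    have hwrap1 : r ((a :: v).getLast (List.cons_ne_nil a v))
        ((a :: v).head (List.cons_ne_nil a v)) := by
      have := hjun ((a :: v).getLast (List.cons_ne_nil a v))
        (by rw [List.getLast?_eq_getLast (List.cons_ne_nil a v)]; rfl)
        a (by rfl)
      exact this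
    have hwrap2 : r ((a :: (w ++ u)).getLast (List.cons_ne_nil _ _))
        ((a :: (w ++ u)).head (List.cons_ne_nil _ _)) := by
      have hgl : ((a :: v) ++ (a :: (w ++ u))).getLast (by simp)
          = (a :: (w ++ u)).getLast (List.cons_ne_nil _ _) :=
        List.getLast_append_of_ne_nil _ _
      have hw := hwr₀ (by simp)
      rw [hgl] at hw
      exact hw
    have hlen1 : (a :: v).length ≤ N := by
      have := congrArg List.length hrot
      simp only [List.length_rotate, List.length_append, List.length_cons] at this ⊢
      simp only [List.length_append, List.length_cons] at hlen
      omega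
    have hlen2 : (a :: (w ++ u)).length ≤ N := by
      simp only [List.length_append, List.length_cons] at hlen ⊢
      omega
    have hmem : ∀ x, x ∈ u ++ a :: (v ++ a :: w) → x ∈ (a :: v) ∨ x ∈ (a :: (w ++ u)) := by
      intro x hx
      have hx₀ : x ∈ (a :: (v ++ a :: w)) ++ u := by
        rw [← hrot]
        exact List.mem_rotate.mpr hx
      rw [hsplit] at hx₀
      exact List.mem_append.mp hx₀
    by_cases haq : q a
    · by_cases h1 : ∃ x ∈ (a :: v), ¬ q x
      · exact IH (a :: v) (List.cons_ne_nil a v) hlen1 hch1 hwrap1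
          ⟨a, List.mem_cons_self, haq⟩ h1
      · push_neg at h1
        obtain ⟨z, hz, hznq⟩ := hnq
        have hz2 : z ∈ (a :: (w ++ u)) :=
          (hmem z hz).resolve_left (fun hmem1 => hznq (h1 z hmem1))
        exact IH (a :: (w ++ u)) (List.cons_ne_nil _ _) hlen2 hch2 hwrap2
          ⟨a, List.mem_cons_self, haq⟩ ⟨z, hz2, hznq⟩
    · by_cases h1 : ∃ x ∈ (a :: v), q x
      · exact IH (a :: v) (List.cons_ne_nil a v) hlen1 hch1 hwrap1 h1
          ⟨a, List.mem_cons_self, haq⟩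
      · push_neg at h1
        obtain ⟨z, hz, hzq⟩ := hq
        have hz2 : z ∈ (a :: (w ++ u)) :=
          (hmem z hz).resolve_left (fun hmem1 => (h1 z hmem1) hzq)
        exact IH (a :: (w ++ u)) (List.cons_ne_nil _ _) hlen2 hch2 hwrap2
          ⟨z, hz2, hzq⟩ ⟨a, List.mem_cons_self, haq⟩

lemma reach_walkTo (r : α → α → Prop) {x y : α}
    (h : Relation.ReflTransGen r x y) :
    x = y ∨ ∃ p : List α, ∃ (hne : (x :: p) ≠ []), (x :: p).Chain' r ∧
      r ((x :: p).getLast hne) y := by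
  induction h using Relation.ReflTransGen.head_induction_on with
  | refl => exact Or.inl rfl
  | head hstep _ ih =>
    rename_i a c _
    rcases ih with rfl | ⟨p, hne, hchp, hlastp⟩
    · exact Or.inr ⟨[], List.cons_ne_nil _ _, List.isChain_singleton a, hstep⟩
    · refine Or.inr ⟨c :: p, List.cons_ne_nil _ _, List.isChain_cons_cons.mpr ⟨hstep, hchp⟩, ?_⟩
      rw [List.getLast_cons (List.cons_ne_nil c p)]
      exact hlastp

end Walks
end PMIrr

/-- Any matrix with the same principal minors as an irreducible matrix is itself
irreducible. -/
theorem isIrreducible_of_samePrincipalMinors {F : Type*} [Field F] {n : ℕ}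
    (hn : 4 ≤ n) (A B : Matrix (Fin n) (Fin n) F) (hA : A.IsIrreducibleBlock)
    (hAB : ∀ S : Finset (Fin n), principalMinor A S = principalMinor B S) :
    B.IsIrreducibleBlock := by
  classical
  rintro ⟨X, hXne, hXuniv, hB0⟩
  rw [Matrix.IsIrreducibleBlock] at hA
  push_neg at hA
  have hMulA : ∀ S, principalMinor A S = principalMinor A (S ∩ X) * principalMinor A (S \ X) := by
    intro S
    rw [hAB S, PMIrr.blockMul B X hB0 S, ← hAB, ← hAB]
  set r : Fin n → Fin n → Prop := fun x y => A y x ≠ 0 with hr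
  have hreach : ∀ i0 u : Fin n, Relation.ReflTransGen r u i0 := by
    intro i0 u
    by_contra hcon
    set R : Finset (Fin n) :=
      Finset.univ.filter (fun w => Relation.ReflTransGen r w i0) with hR
    have hi0R : i0 ∈ R :=
      Finset.mem_filter.mpr ⟨Finset.mem_univ _, Relation.ReflTransGen.refl⟩
    have hRne : R ≠ Finset.univ := by
      intro h
      have hu : u ∈ R := by rw [h]; exact Finset.mem_univ u
      exact hcon (Finset.mem_filter.mp hu).2
    have h1 : (Rᶜ : Finset (Fin n)).Nonempty := by
      by_contra hc
      rw [Finset.not_nonempty_iff_eq_empty, Finset.compl_eq_empty_iff] at hc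
      exact hRne hc
    have h2 : (Rᶜ : Finset (Fin n)) ≠ Finset.univ := by
      intro h
      have : i0 ∈ (Rᶜ : Finset (Fin n)) := h ▸ Finset.mem_univ i0
      exact (Finset.mem_compl.mp this) hi0R
    obtain ⟨i, hiR, j, hjR, hAij⟩ := hA Rᶜ h1 h2
    have hiR' : i ∈ R := not_not.mp (fun h => hiR (Finset.mem_compl.mpr h))
    have hjreach : Relation.ReflTransGen r j i0 :=
      Relation.ReflTransGen.head hAij (Finset.mem_filter.mp hiR').2
    exact (Finset.mem_compl.mp hjR) (Finset.mem_filter.mpr ⟨Finset.mem_univ _, hjreach⟩)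
  obtain ⟨i, hiX, j, hjX, hAij⟩ := hA X hXne hXuniv
  have hij : i ≠ j := fun h => hiX (h ▸ hjX)
  rcases PMIrr.reach_walkTo r (hreach j i) with h | ⟨p, hnep, hchp, hlastp⟩
  · exact hij h
  · have hneL : (j :: i :: p) ≠ [] := List.cons_ne_nil _ _
    have hchL : (j :: i :: p).Chain' r := List.isChain_cons_cons.mpr ⟨hAij, hchp⟩
    have hwrapL : r ((j :: i :: p).getLast hneL) ((j :: i :: p).head hneL) := by
      rw [List.getLast_cons (List.cons_ne_nil i p)]
      exact hlastp
    obtain ⟨l', hne', hnd', hch', hwrap', hq', hnq'⟩ :=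
      PMIrr.dedup_cycle r (· ∈ X) (j :: i :: p).length (j :: i :: p) hneL le_rfl
        hchL hwrapL ⟨j, by simp, hjX⟩ ⟨i, by simp, hiX⟩
    have h0 := PMIrr.key A X hMulA l'.length l' le_rfl hnd' hq' hnq'
    rw [PMIrr.cmon] at h0
    obtain ⟨u, hu, hgu⟩ := List.mem_map.mp (List.prod_eq_zero_iff.mp h0)
    obtain ⟨idx, hilt, rfl⟩ := List.mem_iff_getElem.mp hu
    rw [List.formPerm_apply_getElem _ hnd' idx hilt] at hgu
    rcases Nat.lt_or_ge (idx + 1) l'.length with h1 | h1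
    · simp only [Nat.mod_eq_of_lt h1] at hgu
      have hstep := List.isChain_iff_getElem.mp hch' idx (by omega)
      exact hstep hgu
    · have hieq : idx + 1 = l'.length := by omega
      simp only [hieq, Nat.mod_self] at hgu
      have hlast' : l'.getLast hne' = l'[idx] := by
        rw [List.getLast_eq_getElem]
        congr 1
        omega
      have hhead' : l'.head hne' = l'[0]'(by omega) := List.head_eq_getElem_zero hne'
      have hwx := hwrap'
      rw [hlast', hhead'] at hwx
      exact hwx hgu
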